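/- Under Condition (C), for every θ ∈ [0,2π) the function p_θ has an inverse q_θ : [0, p_θ(ℓ(θ)−)) → [0, ℓ(θ)) which is a strictly increasing continuous bijection with q_θ(0) = 0; q_θ is differentiable with q′_θ(r) = 1 / p′_θ(q_θ(r)) and lim_{r↓0} q′_θ(r) = 1; and for all 0 ≤ r₁ ≤ r₂ < p_θ(ℓ(θ)−) one has q′_θ(r₂) − q′_θ(r₁) = ∫_{r₁}^{r₂} 2 b(q_θ(r),θ) / ( s(q_θ(r),θ)² · (p′_θ(q_θ(r)))² ) dr, i.e. q″_θ(r) = 2 b(q_θ(r),θ) / ( s(q_θ(r),θ)² (p′_θ(q_θ(r)))² ) for Lebesgue-a.e. r. -/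

import Mathlib

open MeasureTheory Set
open scoped Classical ENNReal

/-- `p′_θ(y) = exp(−2∫₀^y b(z,θ)/s(z,θ)² dz)`, the derivative of the radial scale function. -/
noncomputable def pprime (b s : ℝ → ℝ → ℝ) (θ y : ℝ) : ℝ :=
  Real.exp (-2 * ∫ z in (0:ℝ)..y, b z θ / (s z θ) ^ 2)

/-- The radial scale function `p_θ(r) = ∫₀^r p′_θ(y) dy`. -/
noncomputable def pscale (b s : ℝ → ℝ → ℝ) (θ r : ℝ) : ℝ :=
  ∫ y in (0:ℝ)..r, pprime b s θ y

/-- Condition (C): `ℓ` is measurable and bounded away from zero, `b` and `s` are Borel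
measurable on `Ǐ`, `s` vanishes nowhere on `Ǐ`, `b/s²` and `1/s²` are locally integrable
on `(0,ℓ(θ))` along each ray, and `(1+|b|)/s²` is bounded near the origin. -/
structure CondC (ℓ : ℝ → ℝ≥0∞) (b s : ℝ → ℝ → ℝ) : Prop where
  meas_ell : Measurable ℓ
  ell_pos : 0 < ⨅ θ ∈ Ico (0:ℝ) (2 * Real.pi), ℓ θ
  meas_b : Measurable
    (Set.restrict {q : ℝ × ℝ | 0 < q.1 ∧ ENNReal.ofReal q.1 < ℓ q.2 ∧
      q.2 ∈ Ico (0:ℝ) (2 * Real.pi)} (fun q => b q.1 q.2))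
  meas_s : Measurable
    (Set.restrict {q : ℝ × ℝ | 0 < q.1 ∧ ENNReal.ofReal q.1 < ℓ q.2 ∧
      q.2 ∈ Ico (0:ℝ) (2 * Real.pi)} (fun q => s q.1 q.2))
  s_ne : ∀ θ ∈ Ico (0:ℝ) (2 * Real.pi), ∀ r : ℝ, 0 < r → ENNReal.ofReal r < ℓ θ →
    s r θ ≠ 0
  loc_int_b : ∀ θ ∈ Ico (0:ℝ) (2 * Real.pi), ∀ r₁ r₂ : ℝ, 0 < r₁ → r₁ ≤ r₂ →
    ENNReal.ofReal r₂ < ℓ θ → IntegrableOn (fun z => b z θ / (s z θ) ^ 2) (Icc r₁ r₂)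
  loc_int_s : ∀ θ ∈ Ico (0:ℝ) (2 * Real.pi), ∀ r₁ r₂ : ℝ, 0 < r₁ → r₁ ≤ r₂ →
    ENNReal.ofReal r₂ < ℓ θ → IntegrableOn (fun z => 1 / (s z θ) ^ 2) (Icc r₁ r₂)
  bound_near_origin : ∃ η : ℝ, 0 < η ∧
    ENNReal.ofReal η < (⨅ θ ∈ Ico (0:ℝ) (2 * Real.pi), ℓ θ) ∧
    ∃ C : ℝ, ∀ θ ∈ Ico (0:ℝ) (2 * Real.pi), ∀ r ∈ Ioc (0:ℝ) η,
      (1 + |b r θ|) / (s r θ) ^ 2 ≤ C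

/-- `p_θ(ℓ(θ)−) := sup_{0 ≤ r < ℓ(θ)} p_θ(r)`, as an extended nonnegative real. -/
noncomputable def pEnd (ℓ : ℝ → ℝ≥0∞) (b s : ℝ → ℝ → ℝ) (θ : ℝ) : ℝ≥0∞ :=
  ⨆ r ∈ {r : ℝ | 0 ≤ r ∧ ENNReal.ofReal r < ℓ θ}, ENNReal.ofReal (pscale b s θ r)

open Filter Topology

lemma exp_ftc_aux {g : ℝ → ℝ} {a b : ℝ} (hab : a ≤ b)
    (hg : IntervalIntegrable g volume a b) :
    ∫ x in a..b, g x * Real.exp (∫ t in a..x, g t)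
      = Real.exp (∫ t in a..b, g t) - 1 := by
  set G : ℝ → ℝ := fun x => ∫ t in a..x, g t with hGdef
  have hgI : IntegrableOn g (Ioc a b) := by
    rwa [← intervalIntegrable_iff_integrableOn_Ioc_of_le hab]
  have hgabs : IntegrableOn (fun x => |g x|) (Ioc a b) := hgI.abs
  set M : ℝ := ∫ t in Ioc a b, |g t| with hMdef
  have hM0 : 0 ≤ M := setIntegral_nonneg measurableSet_Ioc fun x _ => abs_nonneg _
  have hGcont : ContinuousOn G (Icc a b) := by
    have := intervalIntegral.continuousOn_primitive_interval' hg
      (by rw [uIcc_of_le hab]; exact left_mem_Icc.2 hab)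
    rwa [uIcc_of_le hab] at this
  have hGbound : ∀ x ∈ Icc a b, |G x| ≤ M := by
    intro x hx
    have h1 : |∫ t in a..x, g t| ≤ ∫ t in a..x, |g t| :=
      intervalIntegral.abs_integral_le_integral_abs hx.1
    have h2 : ∫ t in a..x, |g t| = ∫ t in Ioc a x, |g t| :=
      intervalIntegral.integral_of_le hx.1
    have h3 : ∫ t in Ioc a x, |g t| ≤ M :=
      setIntegral_mono_set hgabs (Filter.Eventually.of_forall fun t => abs_nonneg _)
        (HasSubset.Subset.eventuallyLE (Ioc_subset_Ioc_right hx.2))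
    calc |G x| ≤ ∫ t in a..x, |g t| := h1
      _ ≤ M := h2 ▸ h3
  have hIg : IntegrableOn (fun x => g x * Real.exp (G x)) (Ioc a b) := by
    have hGsm : AEStronglyMeasurable (fun x => Real.exp (G x)) (volume.restrict (Ioc a b)) :=
      (Real.continuous_exp.comp_continuousOn
        (hGcont.mono Ioc_subset_Icc_self)).aestronglyMeasurable measurableSet_Ioc
    refine Integrable.mono' (hgabs.mul_const (Real.exp M))
      (hgI.aestronglyMeasurable.mul hGsm) ?_
    filter_upwards [ae_restrict_mem measurableSet_Ioc] with x hx
    rw [norm_mul, Real.norm_eq_abs, Real.norm_eq_abs, abs_of_pos (Real.exp_pos _)]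
    exact mul_le_mul_of_nonneg_left
      (Real.exp_le_exp.2 ((le_abs_self _).trans (hGbound x (Ioc_subset_Icc_self hx))))
      (abs_nonneg _)
  have key : ∀ ε : ℝ, 0 < ε → ε ≤ 1 →
      |(∫ x in a..b, g x * Real.exp (G x)) - (Real.exp (G b) - 1)|
        ≤ ε * (Real.exp M * (2 * M + 5)) := by
    intro ε hε hε1
    -- approximation by a continuous function
    set g0 : ℝ → ℝ := (Ioc a b).indicator g with hg0def
    have hg0 : Integrable g0 := (integrable_indicator_iff measurableSet_Ioc).2 hgI
    obtain ⟨φ, -, hclose, hφc, hφi⟩ := hg0.exists_hasCompactSupport_integral_sub_le hε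
    have φI : IntegrableOn φ (Ioc a b) := hφc.integrableOn_Ioc
    have hdiff : ∫ x in Ioc a b, |g x - φ x| ≤ ε := by
      have h1 : ∫ x in Ioc a b, |g x - φ x| = ∫ x in Ioc a b, ‖g0 x - φ x‖ := by
        refine setIntegral_congr_fun measurableSet_Ioc fun x hx => ?_
        simp [hg0def, indicator_of_mem hx, Real.norm_eq_abs]
      have h2 : ∫ x in Ioc a b, ‖g0 x - φ x‖ ≤ ∫ x, ‖g0 x - φ x‖ :=
        setIntegral_le_integral (hg0.sub hφi).norm
          (Filter.Eventually.of_forall fun x => norm_nonneg _)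
      linarith
    set Φ : ℝ → ℝ := fun x => ∫ t in a..x, φ t with hΦdef
    have hΦd : ∀ x : ℝ, HasDerivAt Φ (φ x) x := fun x =>
      intervalIntegral.integral_hasDerivAt_right (hφc.intervalIntegrable a x)
        (hφc.stronglyMeasurable.stronglyMeasurableAtFilter) hφc.continuousAt
    have hΦcont : Continuous Φ := continuous_iff_continuousAt.2 fun x => (hΦd x).continuousAt
    have hΦa : Φ a = 0 := intervalIntegral.integral_same
    have hftc : ∫ x in a..b, Real.exp (Φ x) * φ x = Real.exp (Φ b) - 1 := by
      have := intervalIntegral.integral_eq_sub_of_hasDerivAt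
        (f := fun x => Real.exp (Φ x)) (f' := fun x => Real.exp (Φ x) * φ x)
        (fun x _ => (hΦd x).exp)
        (((Real.continuous_exp.comp hΦcont).mul hφc).intervalIntegrable a b)
      simpa [hΦa] using this
    have hΦG : ∀ x ∈ Icc a b, |Φ x - G x| ≤ ε := by
      intro x hx
      have hgix : IntervalIntegrable g volume a x :=
        hg.mono_set (by rw [uIcc_of_le hx.1, uIcc_of_le hab]; exact Icc_subset_Icc_right hx.2)
      have hsub : Φ x - G x = ∫ t in a..x, (φ t - g t) := by
        rw [hGdef, intervalIntegral.integral_sub (hφc.intervalIntegrable a x) hgix]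
      have h1 : |∫ t in a..x, (φ t - g t)| ≤ ∫ t in a..x, |φ t - g t| :=
        intervalIntegral.abs_integral_le_integral_abs hx.1
      have h2 : ∫ t in a..x, |φ t - g t| = ∫ t in Ioc a x, |φ t - g t| :=
        intervalIntegral.integral_of_le hx.1
      have hφg : IntegrableOn (fun t => |φ t - g t|) (Ioc a b) := (φI.sub hgI).abs
      have h3 : ∫ t in Ioc a x, |φ t - g t| ≤ ∫ t in Ioc a b, |φ t - g t| :=
        setIntegral_mono_set hφg
          (Filter.Eventually.of_forall fun t => abs_nonneg _)
          (HasSubset.Subset.eventuallyLE (Ioc_subset_Ioc_right hx.2))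
      have h4 : ∫ t in Ioc a b, |φ t - g t| = ∫ t in Ioc a b, |g t - φ t| := by
        simp_rw [abs_sub_comm]
      calc |Φ x - G x| ≤ ∫ t in a..x, |φ t - g t| := hsub ▸ h1
        _ ≤ ε := by rw [h2]; rw [h4] at h3; linarith
    have hexpb : ∀ x y : ℝ, |x| ≤ M → |y - x| ≤ ε → |Real.exp x - Real.exp y| ≤ Real.exp M * (2 * ε) := by
      intro x y hx hxy
      have h1 : Real.exp x - Real.exp y = Real.exp x * (1 - Real.exp (y - x)) := by
        rw [mul_sub, mul_one, ← Real.exp_add]; ring_nf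
      rw [h1, abs_mul, abs_of_pos (Real.exp_pos x), abs_sub_comm]
      have h2 : |Real.exp (y - x) - 1| ≤ 2 * |y - x| :=
        Real.abs_exp_sub_one_le (hxy.trans hε1)
      have h3 : Real.exp x ≤ Real.exp M := Real.exp_le_exp.2 ((le_abs_self x).trans hx)
      calc Real.exp x * |Real.exp (y - x) - 1| ≤ Real.exp M * (2 * |y - x|) := by
            exact mul_le_mul h3 h2 (abs_nonneg _) (Real.exp_pos M).le
        _ ≤ Real.exp M * (2 * ε) := by nlinarith [Real.exp_pos M]
    have hIφ : IntegrableOn (fun x => Real.exp (Φ x) * φ x) (Ioc a b) :=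
      ((Real.continuous_exp.comp hΦcont).mul hφc).integrableOn_Ioc
    have hsubI : IntegrableOn (fun x => |g x - φ x|) (Ioc a b) := (hgI.sub φI).abs
    have hφI2 : IntegrableOn (fun x => |φ x|) (Ioc a b) := φI.abs
    have hφabs_le : ∫ x in Ioc a b, |φ x| ≤ M + ε := by
      have hpt : ∀ x ∈ Ioc a b, |φ x| ≤ |g x| + |g x - φ x| := by
        intro x _
        calc |φ x| = |g x - (g x - φ x)| := by ring_nf
          _ ≤ |g x| + |g x - φ x| := abs_sub _ _
      calc ∫ x in Ioc a b, |φ x| ≤ ∫ x in Ioc a b, (|g x| + |g x - φ x|) :=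
            setIntegral_mono_on hφI2 (hgabs.add hsubI) measurableSet_Ioc hpt
        _ = M + ∫ x in Ioc a b, |g x - φ x| := by
            rw [integral_add hgabs hsubI, hMdef]
        _ ≤ M + ε := by linarith
    have hint_diff : |(∫ x in Ioc a b, g x * Real.exp (G x)) - ∫ x in Ioc a b, Real.exp (Φ x) * φ x|
        ≤ Real.exp M * ε + Real.exp M * (2 * ε) * (M + ε) := by
      rw [← integral_sub hIg hIφ]
      have habs : |∫ x in Ioc a b, (g x * Real.exp (G x) - Real.exp (Φ x) * φ x)|
          ≤ ∫ x in Ioc a b, |g x * Real.exp (G x) - Real.exp (Φ x) * φ x| := by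
        simpa [Real.norm_eq_abs] using norm_integral_le_integral_norm
          (μ := volume.restrict (Ioc a b)) (fun x => g x * Real.exp (G x) - Real.exp (Φ x) * φ x)
      refine habs.trans ?_
      have hpt : ∀ x ∈ Ioc a b, |g x * Real.exp (G x) - Real.exp (Φ x) * φ x|
          ≤ |g x - φ x| * Real.exp M + Real.exp M * (2 * ε) * |φ x| := by
        intro x hx
        have hxI := Ioc_subset_Icc_self hx
        have e1 : g x * Real.exp (G x) - Real.exp (Φ x) * φ x
            = (g x - φ x) * Real.exp (G x) + φ x * (Real.exp (G x) - Real.exp (Φ x)) := by ring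
        rw [e1]
        refine (abs_add_le _ _).trans ?_
        rw [abs_mul, abs_mul]
        have b1 : |Real.exp (G x)| ≤ Real.exp M := by
          rw [abs_of_pos (Real.exp_pos _)]
          exact Real.exp_le_exp.2 ((le_abs_self _).trans (hGbound x hxI))
        have b2 : |Real.exp (G x) - Real.exp (Φ x)| ≤ Real.exp M * (2 * ε) :=
          hexpb _ _ (hGbound x hxI) (hΦG x hxI)
        have := mul_le_mul_of_nonneg_left b1 (abs_nonneg (g x - φ x))
        have := mul_le_mul_of_nonneg_left b2 (abs_nonneg (φ x))
        nlinarith [abs_nonneg (g x - φ x), abs_nonneg (φ x)]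
      calc ∫ x in Ioc a b, |g x * Real.exp (G x) - Real.exp (Φ x) * φ x|
          ≤ ∫ x in Ioc a b, (|g x - φ x| * Real.exp M + Real.exp M * (2 * ε) * |φ x|) :=
            setIntegral_mono_on (hIg.sub hIφ).abs
              ((hsubI.mul_const _).add (hφI2.const_mul _)) measurableSet_Ioc hpt
        _ = (∫ x in Ioc a b, |g x - φ x|) * Real.exp M
              + Real.exp M * (2 * ε) * ∫ x in Ioc a b, |φ x| := by
            rw [integral_add (hsubI.mul_const _) (hφI2.const_mul _),
              integral_mul_const, integral_const_mul]
        _ ≤ Real.exp M * ε + Real.exp M * (2 * ε) * (M + ε) := by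
            have h1 := mul_le_mul_of_nonneg_right hdiff (Real.exp_pos M).le
            have h2 := mul_le_mul_of_nonneg_left hφabs_le
              (by positivity : (0:ℝ) ≤ Real.exp M * (2 * ε))
            linarith
    have e2 : ∫ x in a..b, g x * Real.exp (G x) = ∫ x in Ioc a b, g x * Real.exp (G x) :=
      intervalIntegral.integral_of_le hab
    have e3 : ∫ x in a..b, Real.exp (Φ x) * φ x = ∫ x in Ioc a b, Real.exp (Φ x) * φ x :=
      intervalIntegral.integral_of_le hab
    have hGb : |Real.exp (G b) - Real.exp (Φ b)| ≤ Real.exp M * (2 * ε) :=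
      hexpb _ _ (hGbound b (right_mem_Icc.2 hab)) (hΦG b (right_mem_Icc.2 hab))
    rw [e2]
    have := hftc
    rw [e3] at this
    have hsplit : (∫ x in Ioc a b, g x * Real.exp (G x)) - (Real.exp (G b) - 1)
        = ((∫ x in Ioc a b, g x * Real.exp (G x)) - ∫ x in Ioc a b, Real.exp (Φ x) * φ x)
          - (Real.exp (G b) - Real.exp (Φ b)) := by rw [this]; ring
    have hd : |(∫ x in Ioc a b, g x * Real.exp (G x)) - (Real.exp (G b) - 1)|
        ≤ (Real.exp M * ε + Real.exp M * (2 * ε) * (M + ε)) + Real.exp M * (2 * ε) := by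
      rw [hsplit]
      exact (abs_sub _ _).trans (add_le_add hint_diff hGb)
    refine hd.trans ?_
    have hkey : 0 ≤ Real.exp M * ε * (2 - 2 * ε) :=
      mul_nonneg (mul_nonneg (Real.exp_pos M).le hε.le) (by linarith)
    nlinarith [Real.exp_pos M, hM0]
  -- conclude by letting ε → 0
  set d : ℝ := (∫ x in a..b, g x * Real.exp (G x)) - (Real.exp (G b) - 1) with hddef
  have hd0 : d = 0 := by
    by_contra hd
    have habs : 0 < |d| := abs_pos.2 hd
    set K : ℝ := Real.exp M * (2 * M + 5) with hK
    have hKpos : 0 < K := by positivity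
    have hε : 0 < min 1 (|d| / (2 * K)) := lt_min one_pos (by positivity)
    have := key _ hε (min_le_left _ _)
    have h2 : min 1 (|d| / (2 * K)) * K ≤ (|d| / (2 * K)) * K :=
      mul_le_mul_of_nonneg_right (min_le_right _ _) hKpos.le
    have h3 : (|d| / (2 * K)) * K = |d| / 2 := by field_simp
    rw [h3] at h2
    have : |d| ≤ |d| / 2 := le_trans this h2
    linarith
  have : ∫ x in a..b, g x * Real.exp (G x) = Real.exp (G b) - 1 := by
    have := hd0
    rw [hddef] at this
    linarith
  exact this

lemma exp_ftc_aux2 {g : ℝ → ℝ} {r₁ r₂ : ℝ} (hr : r₁ ≤ r₂)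
    (h01 : IntervalIntegrable g volume 0 r₁)
    (h12 : IntervalIntegrable g volume r₁ r₂) :
    ∫ x in r₁..r₂, 2 * g x * Real.exp (2 * ∫ t in (0:ℝ)..x, g t)
      = Real.exp (2 * ∫ t in (0:ℝ)..r₂, g t) - Real.exp (2 * ∫ t in (0:ℝ)..r₁, g t) := by
  have key := exp_ftc_aux (g := fun z => 2 * g z) hr (h12.const_mul 2)
  set K : ℝ := Real.exp (2 * ∫ t in (0:ℝ)..r₁, g t) with hKdef
  have hsplit : ∀ x, r₁ ≤ x → x ≤ r₂ →
      Real.exp (2 * ∫ t in (0:ℝ)..x, g t) = K * Real.exp (∫ t in r₁..x, 2 * g t) := by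
    intro x hx1 hx2
    have h1x : IntervalIntegrable g volume r₁ x :=
      h12.mono_set (by rw [uIcc_of_le hx1, uIcc_of_le hr]; exact Icc_subset_Icc_right hx2)
    have hadd : (∫ t in (0:ℝ)..r₁, g t) + ∫ t in r₁..x, g t = ∫ t in (0:ℝ)..x, g t :=
      intervalIntegral.integral_add_adjacent_intervals h01 h1x
    rw [intervalIntegral.integral_const_mul, hKdef, ← Real.exp_add, ← hadd]
    ring_nf
  have hcongr : ∫ x in r₁..r₂, 2 * g x * Real.exp (2 * ∫ t in (0:ℝ)..x, g t)
      = ∫ x in r₁..r₂, K * (2 * g x * Real.exp (∫ t in r₁..x, 2 * g t)) := by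
    refine intervalIntegral.integral_congr fun x hx => ?_
    rw [uIcc_of_le hr] at hx
    rw [hsplit x hx.1 hx.2]; ring
  rw [hcongr, intervalIntegral.integral_const_mul, key,
    hsplit r₂ hr le_rfl, intervalIntegral.integral_const_mul]
  ring

/-- Under Condition (C), each `p_θ` has a strictly increasing continuous inverse
`q_θ : [0, p_θ(ℓ(θ)−)) → [0, ℓ(θ))` with `q_θ(0) = 0`, derivative
`q′_θ = 1/(p′_θ ∘ q_θ)` with `q′_θ(0+) = 1`, and second derivative
`q″_θ = 2 b(q_θ,θ)/(s(q_θ,θ)² (p′_θ(q_θ))²)` in the sense of an integral identity. -/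
theorem radial_scale_inverse_properties
    (ℓ : ℝ → ℝ≥0∞) (b s : ℝ → ℝ → ℝ) (h : CondC ℓ b s) :
    ∀ θ ∈ Ico (0:ℝ) (2 * Real.pi), ∃ q : ℝ → ℝ,
      (∀ u : ℝ, 0 ≤ u → ENNReal.ofReal u < pEnd ℓ b s θ →
        0 ≤ q u ∧ ENNReal.ofReal (q u) < ℓ θ ∧ pscale b s θ (q u) = u) ∧
      (∀ r : ℝ, 0 ≤ r → ENNReal.ofReal r < ℓ θ →
        ENNReal.ofReal (pscale b s θ r) < pEnd ℓ b s θ ∧ q (pscale b s θ r) = r) ∧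
      q 0 = 0 ∧
      (∀ u₁ u₂ : ℝ, 0 ≤ u₁ → u₁ < u₂ → ENNReal.ofReal u₂ < pEnd ℓ b s θ →
        q u₁ < q u₂) ∧
      ContinuousOn q {u : ℝ | 0 ≤ u ∧ ENNReal.ofReal u < pEnd ℓ b s θ} ∧
      (∀ u : ℝ, 0 ≤ u → ENNReal.ofReal u < pEnd ℓ b s θ →
        HasDerivWithinAt q (1 / pprime b s θ (q u))
          {w : ℝ | 0 ≤ w ∧ ENNReal.ofReal w < pEnd ℓ b s θ} u) ∧
      Filter.Tendsto (fun u => 1 / pprime b s θ (q u)) (nhdsWithin 0 (Ioi 0)) (nhds 1) ∧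
      (∀ u₁ u₂ : ℝ, 0 ≤ u₁ → u₁ ≤ u₂ → ENNReal.ofReal u₂ < pEnd ℓ b s θ →
        1 / pprime b s θ (q u₂) - 1 / pprime b s θ (q u₁)
          = ∫ u in u₁..u₂,
              2 * b (q u) θ / ((s (q u) θ) ^ 2 * (pprime b s θ (q u)) ^ 2)) := by
  intro θ hθ
  have hℓ : 0 < ℓ θ := h.ell_pos.trans_le (iInf₂_le θ hθ)
  obtain ⟨η, hη0, hηlt, C, hC⟩ := h.bound_near_origin
  have hηθ : ENNReal.ofReal η < ℓ θ := hηlt.trans_le (iInf₂_le θ hθ)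
  -- measurability of the slice
  have hTmeas : MeasurableSet {z : ℝ | 0 < z ∧ ENNReal.ofReal z < ℓ θ} := by
    have he : {z : ℝ | 0 < z ∧ ENNReal.ofReal z < ℓ θ}
        = Ioi 0 ∩ ENNReal.ofReal ⁻¹' (Iio (ℓ θ)) := rfl
    rw [he]
    exact measurableSet_Ioi.inter (ENNReal.measurable_ofReal measurableSet_Iio)
  have hbae : AEMeasurable (fun z => b z θ)
      (volume.restrict {z : ℝ | 0 < z ∧ ENNReal.ofReal z < ℓ θ}) := by
    apply aemeasurable_restrict_of_measurable_subtype hTmeas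
    have hemb : Measurable (fun z : {z : ℝ | 0 < z ∧ ENNReal.ofReal z < ℓ θ} =>
        (⟨((z : ℝ), θ), ⟨z.2.1, z.2.2, hθ⟩⟩ :
          {q : ℝ × ℝ | 0 < q.1 ∧ ENNReal.ofReal q.1 < ℓ q.2 ∧
            q.2 ∈ Ico (0:ℝ) (2 * Real.pi)})) :=
      (measurable_subtype_coe.prodMk measurable_const).subtype_mk
    exact h.meas_b.comp hemb
  have hsae : AEMeasurable (fun z => s z θ)
      (volume.restrict {z : ℝ | 0 < z ∧ ENNReal.ofReal z < ℓ θ}) := by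
    apply aemeasurable_restrict_of_measurable_subtype hTmeas
    have hemb : Measurable (fun z : {z : ℝ | 0 < z ∧ ENNReal.ofReal z < ℓ θ} =>
        (⟨((z : ℝ), θ), ⟨z.2.1, z.2.2, hθ⟩⟩ :
          {q : ℝ × ℝ | 0 < q.1 ∧ ENNReal.ofReal q.1 < ℓ q.2 ∧
            q.2 ∈ Ico (0:ℝ) (2 * Real.pi)})) :=
      (measurable_subtype_coe.prodMk measurable_const).subtype_mk
    exact h.meas_s.comp hemb
  have hgae : AEMeasurable (fun z => b z θ / s z θ ^ 2)
      (volume.restrict {z : ℝ | 0 < z ∧ ENNReal.ofReal z < ℓ θ}) :=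
    hbae.div (hsae.pow_const 2)
  -- bound near origin
  have hgbound : ∀ z ∈ Ioc (0:ℝ) η, |b z θ / s z θ ^ 2| ≤ C := by
    intro z hz
    have hzℓ : ENNReal.ofReal z < ℓ θ := (ENNReal.ofReal_le_ofReal hz.2).trans_lt hηθ
    have hC2 := hC θ hθ z hz
    have hs2 : 0 < s z θ ^ 2 := pow_two_pos_of_ne_zero (h.s_ne θ hθ z hz.1 hzℓ)
    have habs : |b z θ / s z θ ^ 2| = |b z θ| / s z θ ^ 2 := by
      rw [abs_div, abs_of_pos hs2]
    rw [habs]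
    have h1 : |b z θ| / s z θ ^ 2 ≤ (1 + |b z θ|) / s z θ ^ 2 := by
      gcongr
      linarith [abs_nonneg (b z θ)]
    exact h1.trans hC2
  -- integrability along rays
  have hgInt : ∀ y : ℝ, 0 ≤ y → ENNReal.ofReal y < ℓ θ →
      IntegrableOn (fun z => b z θ / s z θ ^ 2) (Ioc 0 y) := by
    intro y hy0 hyℓ
    rcases eq_or_lt_of_le hy0 with hy|hy
    · rw [← hy]; simp
    · have hm0 : 0 < min η y := lt_min hη0 hy
      have hmy : min η y ≤ y := min_le_right _ _
      have hIoc1 : IntegrableOn (fun z => b z θ / s z θ ^ 2) (Ioc 0 (min η y)) := by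
        have hsub : Ioc (0:ℝ) (min η y) ⊆ {z : ℝ | 0 < z ∧ ENNReal.ofReal z < ℓ θ} := by
          intro z hz
          exact ⟨hz.1, (ENNReal.ofReal_le_ofReal (hz.2.trans (min_le_right _ _))).trans_lt hyℓ⟩
        have hmeas : AEMeasurable (fun z => b z θ / s z θ ^ 2)
            (volume.restrict (Ioc 0 (min η y))) := by
          have h2 := hgae.restrict (s := Ioc 0 (min η y))
          rwa [Measure.restrict_restrict measurableSet_Ioc,
            Set.inter_eq_left.mpr hsub] at h2
        have hconst : IntegrableOn (fun _ : ℝ => C) (Ioc 0 (min η y)) :=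
          integrableOn_const measure_Ioc_lt_top.ne
        refine Integrable.mono' hconst hmeas.aestronglyMeasurable ?_
        filter_upwards [ae_restrict_mem measurableSet_Ioc] with z hz
        rw [Real.norm_eq_abs]
        exact hgbound z ⟨hz.1, hz.2.trans (min_le_left _ _)⟩
      have hIoc2 : IntegrableOn (fun z => b z θ / s z θ ^ 2) (Icc (min η y) y) :=
        h.loc_int_b θ hθ (min η y) y hm0 hmy hyℓ
      refine (hIoc1.union hIoc2).mono_set ?_
      intro z hz
      rcases le_or_gt z (min η y) with h'|h'
      · exact Or.inl ⟨hz.1, h'⟩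
      · exact Or.inr ⟨h'.le, hz.2⟩
  have hgII : ∀ x y : ℝ, 0 ≤ x → x ≤ y → ENNReal.ofReal y < ℓ θ →
      IntervalIntegrable (fun z => b z θ / s z θ ^ 2) volume x y := by
    intro x y hx hxy hyℓ
    rw [intervalIntegrable_iff_integrableOn_Ioc_of_le hxy]
    exact (hgInt y (hx.trans hxy) hyℓ).mono_set (Ioc_subset_Ioc_left hx)
  -- pprime facts
  have hppos : ∀ y : ℝ, 0 < pprime b s θ y := fun y => Real.exp_pos _
  have hppcont : ∀ R : ℝ, 0 ≤ R → ENNReal.ofReal R < ℓ θ →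
      ContinuousOn (pprime b s θ) (Icc 0 R) := by
    intro R hR hRℓ
    have hGc : ContinuousOn (fun y => ∫ z in (0:ℝ)..y, b z θ / s z θ ^ 2) (Icc 0 R) := by
      have h2 := intervalIntegral.continuousOn_primitive_interval'
        (hgII 0 R le_rfl hR hRℓ) (by rw [uIcc_of_le hR]; exact left_mem_Icc.2 hR)
      rwa [uIcc_of_le hR] at h2
    exact Real.continuous_exp.comp_continuousOn (continuousOn_const.mul hGc)
  have hppII : ∀ R : ℝ, 0 ≤ R → ENNReal.ofReal R < ℓ θ →
      IntervalIntegrable (pprime b s θ) volume 0 R := by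
    intro R hR hRℓ
    apply ContinuousOn.intervalIntegrable
    rw [uIcc_of_le hR]
    exact hppcont R hR hRℓ
  have hpd : ∀ R : ℝ, 0 ≤ R → ENNReal.ofReal R < ℓ θ → ∀ y ∈ Icc (0:ℝ) R,
      HasDerivWithinAt (pscale b s θ) (pprime b s θ y) (Icc 0 R) y := by
    intro R hR hRℓ y hy
    haveI : Fact (y ∈ Icc (0:ℝ) R) := ⟨hy⟩
    have hint : IntervalIntegrable (pprime b s θ) volume 0 y :=
      (hppII R hR hRℓ).mono_set
        (by rw [uIcc_of_le hy.1, uIcc_of_le hR]; exact Icc_subset_Icc_right hy.2)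
    have hmeas : StronglyMeasurableAtFilter (pprime b s θ) (𝓝[Icc 0 R] y) volume :=
      ⟨Icc 0 R, self_mem_nhdsWithin,
        (hppcont R hR hRℓ).aestronglyMeasurable measurableSet_Icc⟩
    exact intervalIntegral.integral_hasDerivWithinAt_right hint hmeas
      ((hppcont R hR hRℓ) y hy)
  have hpsc0 : pscale b s θ 0 = 0 := intervalIntegral.integral_same
  have hmono : ∀ x : ℝ, 0 ≤ x → ∀ y : ℝ, ENNReal.ofReal y < ℓ θ → x < y →
      pscale b s θ x < pscale b s θ y := by
    intro x hx y hyℓ hxy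
    have hy0 : 0 ≤ y := hx.trans hxy.le
    have hIIR := hppII y hy0 hyℓ
    have hIIx : IntervalIntegrable (pprime b s θ) volume 0 x :=
      hIIR.mono_set (by rw [uIcc_of_le hx, uIcc_of_le hy0]; exact Icc_subset_Icc_right hxy.le)
    have hIIxy : IntervalIntegrable (pprime b s θ) volume x y :=
      hIIR.mono_set (by rw [uIcc_of_le hxy.le, uIcc_of_le hy0]; exact Icc_subset_Icc_left hx)
    have hadd : pscale b s θ x + ∫ t in x..y, pprime b s θ t = pscale b s θ y :=
      intervalIntegral.integral_add_adjacent_intervals hIIx hIIxy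
    have hpos : 0 < ∫ t in x..y, pprime b s θ t :=
      intervalIntegral.intervalIntegral_pos_of_pos_on hIIxy (fun t _ => hppos t) hxy
    linarith
  have hpsc_nonneg : ∀ r : ℝ, 0 ≤ r → ENNReal.ofReal r < ℓ θ → 0 ≤ pscale b s θ r := by
    intro r h0 hrℓ
    rcases eq_or_lt_of_le h0 with h2|h2
    · rw [← h2, hpsc0]
    · have h3 := hmono 0 le_rfl r hrℓ h2
      rw [hpsc0] at h3
      exact h3.le
  have hbeyond : ∀ r : ℝ, 0 ≤ r → ENNReal.ofReal r < ℓ θ →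
      ∃ r', r < r' ∧ 0 ≤ r' ∧ ENNReal.ofReal r' < ℓ θ := by
    intro r h0 hrℓ
    obtain ⟨x, hx0, hx1, hx2⟩ := ENNReal.lt_iff_exists_real_btwn.1 hrℓ
    exact ⟨x, (ENNReal.ofReal_lt_ofReal_iff_of_nonneg h0).1 hx1, hx0, hx2⟩
  have hpEnd_lt : ∀ r : ℝ, 0 ≤ r → ENNReal.ofReal r < ℓ θ →
      ENNReal.ofReal (pscale b s θ r) < pEnd ℓ b s θ := by
    intro r h0 hrℓ
    obtain ⟨r', hrr', hr'0, hr'ℓ⟩ := hbeyond r h0 hrℓ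
    have h1 : pscale b s θ r < pscale b s θ r' := hmono r h0 r' hr'ℓ hrr'
    have h2 : ENNReal.ofReal (pscale b s θ r') ≤ pEnd ℓ b s θ := by
      unfold pEnd
      exact le_iSup₂ (f := fun (r : ℝ) (_ : r ∈ {r : ℝ | 0 ≤ r ∧ ENNReal.ofReal r < ℓ θ}) =>
        ENNReal.ofReal (pscale b s θ r)) r' ⟨hr'0, hr'ℓ⟩
    exact ((ENNReal.ofReal_lt_ofReal_iff_of_nonneg (hpsc_nonneg r h0 hrℓ)).2 h1).trans_le h2
  have hexists : ∀ u : ℝ, 0 ≤ u → ENNReal.ofReal u < pEnd ℓ b s θ →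
      ∃ r, 0 ≤ r ∧ ENNReal.ofReal r < ℓ θ ∧ pscale b s θ r = u := by
    intro u hu hup
    have hup2 : ∃ r : ℝ, (0 ≤ r ∧ ENNReal.ofReal r < ℓ θ) ∧
        ENNReal.ofReal u < ENNReal.ofReal (pscale b s θ r) := by
      unfold pEnd at hup
      simpa [lt_iSup_iff] using hup
    obtain ⟨r, hrmem, hur⟩ := hup2
    have hur' : u < pscale b s θ r := by
      by_contra hcon
      push_neg at hcon
      exact absurd hur (not_lt.2 (ENNReal.ofReal_le_ofReal hcon))
    have hcont : ContinuousOn (pscale b s θ) (Icc 0 r) :=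
      fun y hy => (hpd r hrmem.1 hrmem.2 y hy).continuousWithinAt
    have hmem : u ∈ Icc (pscale b s θ 0) (pscale b s θ r) := by
      rw [hpsc0]; exact ⟨hu, hur'.le⟩
    obtain ⟨r₀, hr₀m, hr₀⟩ := intermediate_value_Icc hrmem.1 hcont hmem
    exact ⟨r₀, hr₀m.1, (ENNReal.ofReal_le_ofReal hr₀m.2).trans_lt hrmem.2, hr₀⟩
  -- the inverse function
  set Q : ℝ → ℝ := fun u =>
    if hu' : ∃ r, 0 ≤ r ∧ ENNReal.ofReal r < ℓ θ ∧ pscale b s θ r = u then hu'.choose else 0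
    with hQdef
  have hQspec : ∀ u : ℝ, 0 ≤ u → ENNReal.ofReal u < pEnd ℓ b s θ →
      0 ≤ Q u ∧ ENNReal.ofReal (Q u) < ℓ θ ∧ pscale b s θ (Q u) = u := by
    intro u hu hup
    have he := hexists u hu hup
    rw [hQdef]
    simp only [dif_pos he]
    exact he.choose_spec
  have hinj : ∀ x : ℝ, 0 ≤ x → ENNReal.ofReal x < ℓ θ → ∀ y : ℝ, 0 ≤ y →
      ENNReal.ofReal y < ℓ θ → pscale b s θ x = pscale b s θ y → x = y := by
    intro x hx hxℓ y hy hyℓ hxy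
    rcases lt_trichotomy x y with hl|he|hl
    · exact absurd hxy (ne_of_lt (hmono x hx y hyℓ hl))
    · exact he
    · exact absurd hxy.symm (ne_of_lt (hmono y hy x hxℓ hl))
  have hQleft : ∀ r : ℝ, 0 ≤ r → ENNReal.ofReal r < ℓ θ →
      ENNReal.ofReal (pscale b s θ r) < pEnd ℓ b s θ ∧ Q (pscale b s θ r) = r := by
    intro r h0 hrℓ
    have h1 := hpEnd_lt r h0 hrℓ
    refine ⟨h1, ?_⟩
    obtain ⟨hq0, hqℓ, hqe⟩ := hQspec (pscale b s θ r) (hpsc_nonneg r h0 hrℓ) h1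
    exact hinj _ hq0 hqℓ _ h0 hrℓ hqe
  have hQ0 : Q 0 = 0 := by
    have h1 := (hQleft 0 le_rfl (by simpa using hℓ)).2
    rwa [hpsc0] at h1
  have hQmono : ∀ u₁ u₂ : ℝ, 0 ≤ u₁ → u₁ < u₂ → ENNReal.ofReal u₂ < pEnd ℓ b s θ →
      Q u₁ < Q u₂ := by
    intro u₁ u₂ h1 h12 h2p
    have h1p : ENNReal.ofReal u₁ < pEnd ℓ b s θ :=
      (ENNReal.ofReal_le_ofReal h12.le).trans_lt h2p
    obtain ⟨s10, s1ℓ, s1e⟩ := hQspec u₁ h1 h1p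
    obtain ⟨s20, s2ℓ, s2e⟩ := hQspec u₂ (h1.trans h12.le) h2p
    by_contra hcon
    push_neg at hcon
    have hle : pscale b s θ (Q u₂) ≤ pscale b s θ (Q u₁) := by
      rcases eq_or_lt_of_le hcon with he|hlt
      · rw [he]
      · exact (hmono (Q u₂) s20 (Q u₁) s1ℓ hlt).le
    rw [s1e, s2e] at hle
    linarith
  have hSmono : StrictMonoOn Q {u : ℝ | 0 ≤ u ∧ ENNReal.ofReal u < pEnd ℓ b s θ} :=
    fun a ha c hc hac => hQmono a c ha.1 hac hc.2
  have hScont : ContinuousOn Q {u : ℝ | 0 ≤ u ∧ ENNReal.ofReal u < pEnd ℓ b s θ} := by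
    intro u hu
    obtain ⟨hQu0, hQuℓ, hQue⟩ := hQspec u hu.1 hu.2
    have hSright : {w : ℝ | 0 ≤ w ∧ ENNReal.ofReal w < pEnd ℓ b s θ} ∈ 𝓝[≥] u := by
      obtain ⟨u', hu'0, h1, h2⟩ := ENNReal.lt_iff_exists_real_btwn.1 hu.2
      have huu' : u < u' := (ENNReal.ofReal_lt_ofReal_iff_of_nonneg hu.1).1 h1
      refine mem_of_superset (Ico_mem_nhdsGE huu') ?_
      intro w hw
      exact ⟨hu.1.trans hw.1,
        ((ENNReal.ofReal_lt_ofReal_iff_of_nonneg (hu.1.trans hw.1)).2 hw.2).trans h2⟩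
    have hbet_r : ∀ v, v > Q u → ∃ c ∈ {w : ℝ | 0 ≤ w ∧ ENNReal.ofReal w < pEnd ℓ b s θ},
        Q c ∈ Ioc (Q u) v := by
      intro v hv
      obtain ⟨r', hr'gt, hr'0, hr'ℓ⟩ := hbeyond (Q u) hQu0 hQuℓ
      have hc1 : Q u < min r' v := lt_min hr'gt hv
      have hc0 : 0 ≤ min r' v := hQu0.trans hc1.le
      have hcℓ : ENNReal.ofReal (min r' v) < ℓ θ :=
        (ENNReal.ofReal_le_ofReal (min_le_left _ _)).trans_lt hr'ℓ
      refine ⟨pscale b s θ (min r' v),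
        ⟨hpsc_nonneg _ hc0 hcℓ, (hQleft _ hc0 hcℓ).1⟩, ?_⟩
      rw [(hQleft _ hc0 hcℓ).2]
      exact ⟨hc1, min_le_right _ _⟩
    have hright : ContinuousWithinAt Q (Ici u) u :=
      hSmono.continuousWithinAt_right_of_exists_between hSright hbet_r
    rcases eq_or_lt_of_le hu.1 with h0u|h0u
    · refine hright.mono ?_
      intro w hw
      rw [← h0u]
      exact hw.1
    · have hSleft : {w : ℝ | 0 ≤ w ∧ ENNReal.ofReal w < pEnd ℓ b s θ} ∈ 𝓝[≤] u := by
        refine mem_of_superset (Icc_mem_nhdsLE_of_mem ⟨h0u, le_rfl⟩) ?_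
        intro w hw
        exact ⟨hw.1, (ENNReal.ofReal_le_ofReal hw.2).trans_lt hu.2⟩
      have hQupos : 0 < Q u := by
        have h2 := hQmono 0 u le_rfl h0u hu.2
        rwa [hQ0] at h2
      have hbet_l : ∀ v, v < Q u → ∃ c ∈ {w : ℝ | 0 ≤ w ∧ ENNReal.ofReal w < pEnd ℓ b s θ},
          Q c ∈ Ico v (Q u) := by
        intro v hv
        have hrc_lt : max v (Q u / 2) < Q u := max_lt hv (by linarith)
        have hrc0 : 0 ≤ max v (Q u / 2) := le_trans (by linarith) (le_max_right _ _)
        have hrcℓ : ENNReal.ofReal (max v (Q u / 2)) < ℓ θ :=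
          (ENNReal.ofReal_le_ofReal hrc_lt.le).trans_lt hQuℓ
        refine ⟨pscale b s θ (max v (Q u / 2)),
          ⟨hpsc_nonneg _ hrc0 hrcℓ, (hQleft _ hrc0 hrcℓ).1⟩, ?_⟩
        rw [(hQleft _ hrc0 hrcℓ).2]
        exact ⟨le_max_left _ _, hrc_lt⟩
      have hleft : ContinuousWithinAt Q (Iic u) u :=
        hSmono.continuousWithinAt_left_of_exists_between hSleft hbet_l
      refine (hleft.union hright).mono ?_
      intro w _
      rcases le_total w u with h'|h'
      · exact Or.inl h'
      · exact Or.inr h'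
  have hQderiv : ∀ u : ℝ, 0 ≤ u → ENNReal.ofReal u < pEnd ℓ b s θ →
      HasDerivWithinAt Q (1 / pprime b s θ (Q u))
        {w : ℝ | 0 ≤ w ∧ ENNReal.ofReal w < pEnd ℓ b s θ} u := by
    intro u hu hup
    obtain ⟨hq0, hqℓ, hqe⟩ := hQspec u hu hup
    obtain ⟨R, hRgt, hR0, hRℓ⟩ := hbeyond (Q u) hq0 hqℓ
    have hIccmem : Icc (0:ℝ) R ∈ 𝓝[{r : ℝ | 0 ≤ r ∧ ENNReal.ofReal r < ℓ θ}] (Q u) := by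
      rw [mem_nhdsWithin]
      exact ⟨Iio R, isOpen_Iio, hRgt, fun z hz => ⟨hz.2.1, hz.1.le⟩⟩
    have hps : HasDerivWithinAt (pscale b s θ) (pprime b s θ (Q u))
        {r : ℝ | 0 ≤ r ∧ ENNReal.ofReal r < ℓ θ} (Q u) :=
      (hpd R hR0 hRℓ (Q u) ⟨hq0, hRgt.le⟩).mono_of_mem_nhdsWithin hIccmem
    have h1 : Tendsto (slope (pscale b s θ) (Q u))
        (𝓝[{r : ℝ | 0 ≤ r ∧ ENNReal.ofReal r < ℓ θ} \ {Q u}] (Q u))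
        (𝓝 (pprime b s θ (Q u))) := hasDerivWithinAt_iff_tendsto_slope.1 hps
    have hQc : ContinuousWithinAt Q {w : ℝ | 0 ≤ w ∧ ENNReal.ofReal w < pEnd ℓ b s θ} u :=
      hScont u ⟨hu, hup⟩
    have hmaps : MapsTo Q ({w : ℝ | 0 ≤ w ∧ ENNReal.ofReal w < pEnd ℓ b s θ} \ {u})
        ({r : ℝ | 0 ≤ r ∧ ENNReal.ofReal r < ℓ θ} \ {Q u}) := by
      intro w hw
      obtain ⟨hw0, hwℓ, hwe⟩ := hQspec w hw.1.1 hw.1.2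
      refine ⟨⟨hw0, hwℓ⟩, ?_⟩
      simp only [mem_singleton_iff]
      intro hcon
      apply hw.2
      simp only [mem_singleton_iff]
      rw [← hwe, hcon, hqe]
    have hQval : Tendsto Q (𝓝[{w : ℝ | 0 ≤ w ∧ ENNReal.ofReal w < pEnd ℓ b s θ} \ {u}] u)
        (𝓝[{r : ℝ | 0 ≤ r ∧ ENNReal.ofReal r < ℓ θ} \ {Q u}] (Q u)) :=
      (hQc.mono diff_subset).tendsto_nhdsWithin hmaps
    have h3 := h1.comp hQval
    have h4 := h3.inv₀ (ne_of_gt (hppos (Q u)))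
    rw [hasDerivWithinAt_iff_tendsto_slope, one_div]
    refine Tendsto.congr' ?_ h4
    filter_upwards [self_mem_nhdsWithin] with w hw
    obtain ⟨hw0, hwℓ, hwe⟩ := hQspec w hw.1.1 hw.1.2
    show (slope (pscale b s θ) (Q u) (Q w))⁻¹ = slope Q u w
    rw [slope_def_field, slope_def_field, hwe, hqe, inv_div]
  have hQlim : Tendsto (fun u => 1 / pprime b s θ (Q u)) (𝓝[>] (0:ℝ)) (𝓝 1) := by
    obtain ⟨c, hc0', h0c, hcℓ⟩ := ENNReal.lt_iff_exists_real_btwn.1 hℓ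
    have hcpos : 0 < c := ENNReal.ofReal_pos.1 h0c
    have hc2ℓ : ENNReal.ofReal (c / 2) < ℓ θ :=
      (ENNReal.ofReal_le_ofReal (by linarith)).trans_lt hcℓ
    have hc20 : (0:ℝ) ≤ c / 2 := by linarith
    have hεpos : 0 < pscale b s θ (c / 2) := by
      have h2 := hmono 0 le_rfl (c / 2) hc2ℓ (by linarith)
      rwa [hpsc0] at h2
    have hεp : ENNReal.ofReal (pscale b s θ (c / 2)) < pEnd ℓ b s θ :=
      hpEnd_lt (c / 2) hc20 hc2ℓ
    rw [← nhdsWithin_Ioo_eq_nhdsGT hεpos]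
    have hIooS : Ioo (0:ℝ) (pscale b s θ (c / 2)) ⊆
        {w : ℝ | 0 ≤ w ∧ ENNReal.ofReal w < pEnd ℓ b s θ} := by
      intro w hw
      exact ⟨hw.1.le,
        ((ENNReal.ofReal_lt_ofReal_iff_of_nonneg hw.1.le).2 hw.2).trans hεp⟩
    have hmapsto : MapsTo Q (Ioo 0 (pscale b s θ (c / 2))) (Icc 0 c) := by
      intro w hw
      have hwS := hIooS hw
      obtain ⟨hw0, hwℓ, hwe⟩ := hQspec w hwS.1 hwS.2
      refine ⟨hw0, ?_⟩
      have h2 : Q w < Q (pscale b s θ (c / 2)) := hQmono w _ hwS.1 hw.2 hεp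
      rw [(hQleft (c / 2) hc20 hc2ℓ).2] at h2
      linarith
    have h0S : (0:ℝ) ∈ {u : ℝ | 0 ≤ u ∧ ENNReal.ofReal u < pEnd ℓ b s θ} := by
      refine ⟨le_rfl, ?_⟩
      have h2 := hpEnd_lt 0 le_rfl (by simpa using hℓ)
      rwa [hpsc0] at h2
    have hQc0 : ContinuousWithinAt Q
        {u : ℝ | 0 ≤ u ∧ ENNReal.ofReal u < pEnd ℓ b s θ} 0 := hScont 0 h0S
    have hQt : Tendsto Q (𝓝[Ioo (0:ℝ) (pscale b s θ (c / 2))] 0) (𝓝[Icc (0:ℝ) c] (Q 0)) :=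
      (hQc0.mono hIooS).tendsto_nhdsWithin hmapsto
    rw [hQ0] at hQt
    have hppc : ContinuousWithinAt (pprime b s θ) (Icc 0 c) 0 :=
      hppcont c hcpos.le hcℓ 0 ⟨le_rfl, hcpos.le⟩
    have hcomp : Tendsto (fun u => pprime b s θ (Q u))
        (𝓝[Ioo (0:ℝ) (pscale b s θ (c / 2))] 0) (𝓝 (pprime b s θ 0)) := hppc.tendsto.comp hQt
    have hpp0 : pprime b s θ 0 = 1 := by
      rw [show pprime b s θ 0 = Real.exp (-2 * ∫ t in (0:ℝ)..(0:ℝ), b t θ / s t θ ^ 2)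
        from rfl, intervalIntegral.integral_same]
      norm_num
    rw [hpp0] at hcomp
    have h4 := hcomp.inv₀ one_ne_zero
    simp only [one_div]
    simpa using h4
  have hQint : ∀ u₁ u₂ : ℝ, 0 ≤ u₁ → u₁ ≤ u₂ → ENNReal.ofReal u₂ < pEnd ℓ b s θ →
      1 / pprime b s θ (Q u₂) - 1 / pprime b s θ (Q u₁)
        = ∫ u in u₁..u₂, 2 * b (Q u) θ / ((s (Q u) θ) ^ 2 * (pprime b s θ (Q u)) ^ 2) := by
    intro u₁ u₂ hu₁ h12 hu₂p
    have hu₁p : ENNReal.ofReal u₁ < pEnd ℓ b s θ :=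
      (ENNReal.ofReal_le_ofReal h12).trans_lt hu₂p
    obtain ⟨hq10, hq1ℓ, hq1e⟩ := hQspec u₁ hu₁ hu₁p
    obtain ⟨hq20, hq2ℓ, hq2e⟩ := hQspec u₂ (hu₁.trans h12) hu₂p
    have hr12 : Q u₁ ≤ Q u₂ := by
      rcases eq_or_lt_of_le h12 with he|hl
      · rw [he]
      · exact (hQmono u₁ u₂ hu₁ hl hu₂p).le
    have hDmem : ∀ x ∈ Ioc (Q u₁) (Q u₂), 0 < x ∧ ENNReal.ofReal x < ℓ θ := fun x hx =>
      ⟨hq10.trans_lt hx.1, (ENNReal.ofReal_le_ofReal hx.2).trans_lt hq2ℓ⟩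
    have himg : pscale b s θ '' Ioc (Q u₁) (Q u₂) = Ioc u₁ u₂ := by
      ext v
      constructor
      · rintro ⟨x, hx, rfl⟩
        have hxD := hDmem x hx
        constructor
        · have h2 := hmono (Q u₁) hq10 x hxD.2 hx.1
          rwa [hq1e] at h2
        · rcases eq_or_lt_of_le hx.2 with he|hl
          · rw [he, hq2e]
          · have h2 := hmono x hxD.1.le (Q u₂) hq2ℓ hl
            rw [hq2e] at h2
            exact h2.le
      · intro hv
        have hv0 : 0 ≤ v := hu₁.trans hv.1.le
        have hvp : ENNReal.ofReal v < pEnd ℓ b s θ :=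
          (ENNReal.ofReal_le_ofReal hv.2).trans_lt hu₂p
        obtain ⟨hqv0, hqvℓ, hqve⟩ := hQspec v hv0 hvp
        refine ⟨Q v, ⟨hQmono u₁ v hu₁ hv.1 hvp, ?_⟩, hqve⟩
        rcases eq_or_lt_of_le hv.2 with he|hl
        · rw [he]
        · exact (hQmono v u₂ hv0 hl hu₂p).le
    have hder : ∀ x ∈ Ioc (Q u₁) (Q u₂), HasDerivWithinAt (pscale b s θ)
        (pprime b s θ x) (Ioc (Q u₁) (Q u₂)) x := by
      intro x hx
      exact (hpd (Q u₂) hq20 hq2ℓ x ⟨(hDmem x hx).1.le, hx.2⟩).mono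
        (fun z hz => ⟨(hDmem z hz).1.le, hz.2⟩)
    have hinjOn : InjOn (pscale b s θ) (Ioc (Q u₁) (Q u₂)) := by
      intro x hx y hy hxy
      exact hinj x (hDmem x hx).1.le (hDmem x hx).2 y (hDmem y hy).1.le (hDmem y hy).2 hxy
    have hchg := integral_image_eq_integral_abs_deriv_smul measurableSet_Ioc hder hinjOn
      (fun v => 2 * b (Q v) θ / ((s (Q v) θ) ^ 2 * (pprime b s θ (Q v)) ^ 2))
    rw [himg] at hchg
    have hcongr : ∫ x in Ioc (Q u₁) (Q u₂), |pprime b s θ x| •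
          (2 * b (Q (pscale b s θ x)) θ /
            ((s (Q (pscale b s θ x)) θ) ^ 2 * (pprime b s θ (Q (pscale b s θ x))) ^ 2))
        = ∫ x in Ioc (Q u₁) (Q u₂),
            2 * (b x θ / s x θ ^ 2) * Real.exp (2 * ∫ t in (0:ℝ)..x, b t θ / s t θ ^ 2) := by
      refine setIntegral_congr_fun measurableSet_Ioc fun x hx => ?_
      have hxD := hDmem x hx
      rw [(hQleft x hxD.1.le hxD.2).2]
      have hsx : s x θ ^ 2 ≠ 0 := pow_ne_zero 2 (h.s_ne θ hθ x hxD.1 hxD.2)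
      have hpne : pprime b s θ x ≠ 0 := (hppos x).ne'
      have hexp : pprime b s θ x * Real.exp (2 * ∫ t in (0:ℝ)..x, b t θ / s t θ ^ 2) = 1 := by
        rw [show pprime b s θ x
            = Real.exp (-2 * ∫ t in (0:ℝ)..x, b t θ / s t θ ^ 2) from rfl,
          ← Real.exp_add]
        rw [show -2 * (∫ t in (0:ℝ)..x, b t θ / s t θ ^ 2)
            + 2 * ∫ t in (0:ℝ)..x, b t θ / s t θ ^ 2 = 0 by ring]
        exact Real.exp_zero
      have hE := inv_eq_of_mul_eq_one_right hexp
      rw [smul_eq_mul, abs_of_pos (hppos x), ← hE]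
      field_simp
    have hppinv : ∀ r : ℝ, 1 / pprime b s θ r
        = Real.exp (2 * ∫ t in (0:ℝ)..r, b t θ / s t θ ^ 2) := by
      intro r
      rw [one_div, show pprime b s θ r
          = Real.exp (-2 * ∫ t in (0:ℝ)..r, b t θ / s t θ ^ 2) from rfl, ← Real.exp_neg]
      congr 1
      ring
    have haux := exp_ftc_aux2 (g := fun z => b z θ / s z θ ^ 2) hr12
      (hgII 0 (Q u₁) le_rfl hq10 hq1ℓ) (hgII (Q u₁) (Q u₂) hq10 hr12 hq2ℓ)
    calc 1 / pprime b s θ (Q u₂) - 1 / pprime b s θ (Q u₁)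
        = Real.exp (2 * ∫ t in (0:ℝ)..(Q u₂), b t θ / s t θ ^ 2)
            - Real.exp (2 * ∫ t in (0:ℝ)..(Q u₁), b t θ / s t θ ^ 2) := by
          rw [hppinv, hppinv]
      _ = ∫ x in (Q u₁)..(Q u₂),
            2 * (b x θ / s x θ ^ 2) * Real.exp (2 * ∫ t in (0:ℝ)..x, b t θ / s t θ ^ 2) :=
          haux.symm
      _ = ∫ x in Ioc (Q u₁) (Q u₂),
            2 * (b x θ / s x θ ^ 2) * Real.exp (2 * ∫ t in (0:ℝ)..x, b t θ / s t θ ^ 2) :=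
          intervalIntegral.integral_of_le hr12
      _ = ∫ x in Ioc (Q u₁) (Q u₂), |pprime b s θ x| •
            (2 * b (Q (pscale b s θ x)) θ /
              ((s (Q (pscale b s θ x)) θ) ^ 2 * (pprime b s θ (Q (pscale b s θ x))) ^ 2)) :=
          hcongr.symm
      _ = ∫ v in Ioc u₁ u₂, 2 * b (Q v) θ / ((s (Q v) θ) ^ 2 * (pprime b s θ (Q v)) ^ 2) :=
          hchg.symm
      _ = ∫ u in u₁..u₂, 2 * b (Q u) θ / ((s (Q u) θ) ^ 2 * (pprime b s θ (Q u)) ^ 2) :=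
          (intervalIntegral.integral_of_le h12).symm
  exact ⟨Q, hQspec, hQleft, hQ0, hQmono, hScont, hQderiv, hQlim, hQint⟩
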